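/- Let π be a finite set of pairwise independent STRIPS actions over L with pre(π) ⊆ s, and let l be any linearization of π (a list enumerating each action of π exactly once, in any order). Then the sequential execution of l from s yields exactly the state produced by the layer application: foldl γ s l = (s \ del(π)) ∪ add(π) = γ(s, π). -/

import Mathlib

namespace STRIPS

/-- A STRIPS action over a type `L` of logical propositions. -/
structure Action (L : Type*) where
  pre : Set L
  add : Set L
  del : Set L

/-- Applying an action `a` to a state `s`: `γ(s, a) = (s \ del(a)) ∪ add(a)`. -/
def gamma {L : Type*} (s : Set L) (a : Action L) : Set L :=
  (s \ a.del) ∪ a.add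

/-- Two actions are independent iff `del(a) ∩ (pre(b) ∪ add(b)) = ∅`
and `del(b) ∩ (pre(a) ∪ add(a)) = ∅`. -/
def Indep {L : Type*} (a b : Action L) : Prop :=
  a.del ∩ (b.pre ∪ b.add) = ∅ ∧ b.del ∩ (a.pre ∪ a.add) = ∅

/-- `pre(π) = ⋃_{a ∈ π} pre(a)`. -/
def preL {L : Type*} (π : Set (Action L)) : Set L := ⋃ a ∈ π, a.pre

/-- `add(π) = ⋃_{a ∈ π} add(a)`. -/
def addL {L : Type*} (π : Set (Action L)) : Set L := ⋃ a ∈ π, a.add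

/-- `del(π) = ⋃_{a ∈ π} del(a)`. -/
def delL {L : Type*} (π : Set (Action L)) : Set L := ⋃ a ∈ π, a.del

/-- Applying an action layer `π` to a state `s`:
`γ(s, π) = (s \ del(π)) ∪ add(π)`. -/
def gammaL {L : Type*} (s : Set L) (π : Set (Action L)) : Set L :=
  (s \ delL π) ∪ addL π

/-- The actions in `π` are pairwise independent. -/
def PairwiseIndep {L : Type*} (π : Set (Action L)) : Prop :=
  ∀ a ∈ π, ∀ b ∈ π, a ≠ b → Indep a b

/-- `l` is a linearization of `π`: a list enumerating each action of `π`
exactly once. -/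
def Linearization {L : Type*} (π : Set (Action L)) (l : List (Action L)) : Prop :=
  l.Nodup ∧ ∀ a, a ∈ l ↔ a ∈ π

/-- Let `π` be a finite set of pairwise independent actions with
`pre(π) ⊆ s` and let `l` be any linearization of `π`. Then the sequential
execution of `l` from `s` yields exactly the state produced by the layer
application: `foldl γ s l = (s \ del(π)) ∪ add(π) = γ(s, π)`. -/
lemma foldl_gamma_eq {L : Type*} :
    ∀ (l : List (Action L)) (s : Set L), l.Nodup →
      (∀ a ∈ l, ∀ b ∈ l, a ≠ b → Indep a b) →
      l.foldl gamma s = (s \ delL {a | a ∈ l}) ∪ addL {a | a ∈ l}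
  | [], s, _, _ => by
      simp [delL, addL]
  | a :: t, s, hnd, hind => by
      have hnd' : t.Nodup := (List.nodup_cons.mp hnd).2
      have hat : a ∉ t := (List.nodup_cons.mp hnd).1
      have hind' : ∀ x ∈ t, ∀ y ∈ t, x ≠ y → Indep x y := fun x hx y hy =>
        hind x (List.mem_cons_of_mem _ hx) y (List.mem_cons_of_mem _ hy)
      have ih := foldl_gamma_eq t (gamma s a) hnd' hind'
      have hdel : ∀ b ∈ t, ∀ x ∈ b.del, x ∉ a.add := by
        intro b hb x hx hxa
        have hI : Indep a b := hind a List.mem_cons_self b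
          (List.mem_cons_of_mem _ hb) (fun h => hat (h ▸ hb))
        have := hI.2
        have : x ∈ b.del ∩ (a.pre ∪ a.add) := ⟨hx, Or.inr hxa⟩
        rw [hI.2] at this
        exact this
      have hdL : delL {b | b ∈ (a :: t)} = a.del ∪ delL {b | b ∈ t} := by
        ext x
        simp only [delL, Set.mem_iUnion, Set.mem_setOf_eq, List.mem_cons,
          Set.mem_union, exists_prop]
        constructor
        · rintro ⟨b, (rfl | hb), hx⟩
          · exact Or.inl hx
          · exact Or.inr ⟨b, hb, hx⟩
        · rintro (hx | ⟨b, hb, hx⟩)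
          · exact ⟨a, Or.inl rfl, hx⟩
          · exact ⟨b, Or.inr hb, hx⟩
      have haL : addL {b | b ∈ (a :: t)} = a.add ∪ addL {b | b ∈ t} := by
        ext x
        simp only [addL, Set.mem_iUnion, Set.mem_setOf_eq, List.mem_cons,
          Set.mem_union, exists_prop]
        constructor
        · rintro ⟨b, (rfl | hb), hx⟩
          · exact Or.inl hx
          · exact Or.inr ⟨b, hb, hx⟩
        · rintro (hx | ⟨b, hb, hx⟩)
          · exact ⟨a, Or.inl rfl, hx⟩
          · exact ⟨b, Or.inr hb, hx⟩
      have hBD : a.add \ delL {b | b ∈ t} = a.add := by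
        ext x
        simp only [Set.mem_diff, delL, Set.mem_iUnion, Set.mem_setOf_eq,
          exists_prop, and_iff_left_iff_imp]
        rintro hx ⟨b, hb, hxb⟩
        exact hdel b hb x hxb hx
      rw [List.foldl_cons, ih, hdL, haL, gamma, Set.union_diff_distrib, hBD,
        Set.diff_diff, Set.union_assoc]

theorem linearization_foldl_eq_gammaL {L : Type*} (s : Set L)
    (π : Set (Action L)) (hfin : π.Finite) (hind : PairwiseIndep π)
    (hpre : preL π ⊆ s) (l : List (Action L)) (hl : Linearization π l) :
    l.foldl gamma s = (s \ delL π) ∪ addL π ∧ l.foldl gamma s = gammaL s π := by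
  have hset : {a | a ∈ l} = π := Set.ext fun a => hl.2 a
  have h := foldl_gamma_eq l s hl.1
    (fun a ha b hb => hind a ((hl.2 a).mp ha) b ((hl.2 b).mp hb))
  rw [hset] at h
  exact ⟨h, h⟩

end STRIPS
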